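/- arXiv:2101.09207 — 4 statements merged into one kernel-verified Lean document; each statement's English description precedes it below -/
import Mathlib

section
/- Let Σ be a symmetric positive definite d×d real matrix, μ, μ_old, μ̂ vectors in ℝ^d, and ε > 0. If (μ̂ - μ_old)ᵀ Σ⁻¹ (μ̂ - μ_old) > ε, then the vector μ̃ = (μ̂ + ω μ_old)/(1 + ω) with ω = sqrt((μ̂ - μ_old)ᵀ Σ⁻¹ (μ̂ - μ_old)/ε) − 1 satisfies (μ̃ - μ_old)ᵀ Σ⁻¹ (μ̃ - μ_old) = ε. -/
open Matrix

/-- Mahalanobis mean projection attains the bound exactly when the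
predicted mean violates the trust region. -/
theorem mean_projection_active {d : ℕ} (Sig : Matrix (Fin d) (Fin d) ℝ)
    (hSig : Sig.PosDef) (μ μold μhat : Fin d → ℝ) (ε : ℝ) (hε : 0 < ε)
    (hviol : (μhat - μold) ⬝ᵥ (Sig⁻¹ *ᵥ (μhat - μold)) > ε)
    (ω : ℝ) (hω : ω = Real.sqrt ((μhat - μold) ⬝ᵥ (Sig⁻¹ *ᵥ (μhat - μold)) / ε) - 1)
    (μtil : Fin d → ℝ) (hμtil : μtil = (1 / (1 + ω)) • (μhat + ω • μold)) :
    (μtil - μold) ⬝ᵥ (Sig⁻¹ *ᵥ (μtil - μold)) = ε := by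
  set m : ℝ := (μhat - μold) ⬝ᵥ (Sig⁻¹ *ᵥ (μhat - μold)) with hm
  have hmpos : 0 < m := lt_trans hε hviol
  have hsq : (1 + ω) ^ 2 = m / ε := by
    have h1 : 1 + ω = Real.sqrt (m / ε) := by rw [hω]; ring
    rw [h1, Real.sq_sqrt (by positivity)]
  have hne : (1 : ℝ) + ω ≠ 0 := by
    intro h
    rw [h] at hsq
    simp at hsq
    have := hsq.symm
    exact absurd (div_eq_zero_iff.mp this) (by push_neg; exact ⟨hmpos.ne', fun h => absurd h hε.ne'⟩)
  have hdiff : μtil - μold = (1 / (1 + ω)) • (μhat - μold) := by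
    rw [hμtil]
    funext i
    simp [Pi.sub_apply, Pi.smul_apply, Pi.add_apply]
    field_simp
    ring
  rw [hdiff, smul_dotProduct, mulVec_smul, dotProduct_smul, ← hm]
  simp only [smul_eq_mul]
  field_simp
  have h2 : ε * ((1 + ω) * (1 + ω)) = m := by
    rw [← pow_two, hsq]; field_simp
  linarith
end

section
/- Let Σ, Σ_old be commuting symmetric positive definite d×d matrices with square roots Σ^{1/2}, Σ_old^{1/2}, and assume t := tr(I + Σ_old⁻¹Σ − 2 Σ_old^{−1/2} Σ^{1/2}) > ε > 0. Define η = sqrt(t/ε) − 1 and S̃ = (Σ^{1/2} + η Σ_old^{1/2})/(1+η), Σ̃ = S̃². Then tr(I + Σ_old⁻¹ Σ̃ − 2 Σ_old^{−1/2} Σ̃^{1/2}) = ε. -/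
open Matrix

private lemma trace_ctms_eq {n : ℕ} (A : Matrix (Fin n) (Fin n) ℝ) :
    (Aᴴ * A).trace = ∑ j, ∑ i, (A i j)^2 := by
  simp [Matrix.trace, Matrix.diag, Matrix.mul_apply, Matrix.conjTranspose_apply, sq]

private lemma trace_ctms_nonneg {n : ℕ} (A : Matrix (Fin n) (Fin n) ℝ) :
    0 ≤ (Aᴴ * A).trace := by
  rw [trace_ctms_eq]; positivity

private lemma eq_zero_of_trace_ctms {n : ℕ} (A : Matrix (Fin n) (Fin n) ℝ)
    (h : (Aᴴ * A).trace = 0) : A = 0 := by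
  rw [trace_ctms_eq] at h
  have h1 : ∀ j ∈ Finset.univ, ∀ i ∈ Finset.univ, (A i j)^2 = 0 := by
    have := (Finset.sum_eq_zero_iff_of_nonneg (fun j _ => by positivity)).mp h
    intro j _ i _
    exact (Finset.sum_eq_zero_iff_of_nonneg (fun i _ => by positivity)).mp
      (this j (Finset.mem_univ j)) i (Finset.mem_univ i)
  ext i j
  simpa using pow_eq_zero_iff (n := 2) (by norm_num) |>.mp
    (h1 j (Finset.mem_univ j) i (Finset.mem_univ i))

open scoped MatrixOrder in
/-- If `X` commutes with `S * S` for positive definite `S`, then `X` commutes with `S`. -/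
private lemma commute_of_commute_sq {n : ℕ} (S X : Matrix (Fin n) (Fin n) ℝ) (hS : S.PosDef)
    (h : X * (S * S) = (S * S) * X) : X * S = S * X := by
  set Z := X * S - S * X with hZdef
  have hZ : S * Z = -(Z * S) := by
    have e : S * Z + Z * S = X * (S * S) - (S * S) * X := by rw [hZdef]; noncomm_ring
    rw [h, sub_self] at e
    linear_combination (norm := noncomm_ring) e
  set R := CFC.sqrt S with hRdef
  have hR2 : R * R = S := CFC.sqrt_mul_sqrt_self S hS.posSemidef.nonneg
  have hRH : Rᴴ = R := (CFC.sqrt_nonneg S).posSemidef.1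
  have key : ((R * Z)ᴴ * (R * Z)).trace = -(((Z * R)ᴴ * (Z * R)).trace) := by
    have e1 : (R * Z)ᴴ * (R * Z) = Zᴴ * (S * Z) := by
      rw [conjTranspose_mul, hRH]
      rw [Matrix.mul_assoc, ← Matrix.mul_assoc R R Z, hR2]
    have e2 : (Z * R)ᴴ * (Z * R) = R * (Zᴴ * Z) * R := by
      rw [conjTranspose_mul, hRH]; noncomm_ring
    rw [e1, e2, hZ, Matrix.mul_neg, trace_neg]
    congr 1
    rw [Matrix.trace_mul_cycle R (Zᴴ * Z) R, ← Matrix.mul_assoc, hR2,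
      ← Matrix.mul_assoc, Matrix.trace_mul_comm, Matrix.mul_assoc]
  have h0 : ((R * Z)ᴴ * (R * Z)).trace = 0 :=
    le_antisymm (by linarith [trace_ctms_nonneg (Z * R), key]) (trace_ctms_nonneg (R * Z))
  have hRZ : R * Z = 0 := eq_zero_of_trace_ctms _ h0
  have hdetR : IsUnit R.det := by
    have hrr : R.det * R.det = S.det := by rw [← det_mul, hR2]
    have hd := hS.det_pos
    refine isUnit_iff_ne_zero.mpr fun h0 => ?_
    rw [h0, mul_zero] at hrr; exact (hrr ▸ hd).false
  have hZ0 : Z = 0 := by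
    have := congrArg (fun M => R⁻¹ * M) hRZ
    simpa [← Matrix.mul_assoc, Matrix.nonsing_inv_mul R hdetR] using this
  exact sub_eq_zero.mp (hZdef ▸ hZ0)

/-- Wasserstein-2 covariance projection under commutativity: interpolating the
matrix square roots exactly attains the W2 trust-region bound ε. The square roots
SA of Sig and SB of Sold are given as (unique) symmetric positive definite witnesses;
by commutativity, Σ̃^{1/2} = S̃, so the conclusion is stated with S̃ and SB⁻¹. -/
theorem wasserstein_projection_active {d : ℕ} (Sig Sold SA SB : Matrix (Fin d) (Fin d) ℝ)
    (hSig : Sig.PosDef) (hSold : Sold.PosDef)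
    (hcomm : Sig * Sold = Sold * Sig)
    (hSA : SA.PosDef) (hSA2 : SA * SA = Sig)
    (hSB : SB.PosDef) (hSB2 : SB * SB = Sold)
    (ε t : ℝ) (hε : 0 < ε)
    (ht : t = ((1 : Matrix (Fin d) (Fin d) ℝ) + Sold⁻¹ * Sig - 2 • (SB⁻¹ * SA)).trace)
    (hviol : t > ε)
    (η : ℝ) (hη : η = Real.sqrt (t / ε) - 1)
    (Stil : Matrix (Fin d) (Fin d) ℝ)
    (hStil : Stil = (1 / (1 + η)) • (SA + η • SB)) :
    ((1 : Matrix (Fin d) (Fin d) ℝ) + Sold⁻¹ * (Stil * Stil) - 2 • (SB⁻¹ * Stil)).trace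
      = ε := by
  -- commutation of the square roots
  have hSoldA : Sold * SA = SA * Sold :=
    commute_of_commute_sq SA Sold hSA (by rw [hSA2]; exact hcomm.symm)
  have hAB : SA * SB = SB * SA :=
    commute_of_commute_sq SB SA hSB (by rw [hSB2]; exact hSoldA.symm)
  -- invertibility of SB
  have hdetB : IsUnit SB.det := hSB.det_pos.ne'.isUnit
  have hBinv : SB⁻¹ * SB = 1 := Matrix.nonsing_inv_mul SB hdetB
  have hBinv' : SB * SB⁻¹ = 1 := Matrix.mul_nonsing_inv SB hdetB
  have hABinv : SA * SB⁻¹ = SB⁻¹ * SA := by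
    have h1 := congrArg (fun M => SB⁻¹ * M * SB⁻¹) hAB
    simp only [Matrix.mul_assoc] at h1
    rw [hBinv'] at h1
    simp only [← Matrix.mul_assoc] at h1
    rw [hBinv, Matrix.mul_one, Matrix.one_mul] at h1
    exact h1.symm
  have hSoldinv : Sold⁻¹ = SB⁻¹ * SB⁻¹ := by rw [← hSB2, Matrix.mul_inv_rev]
  set M := SB⁻¹ * SA with hMdef
  have hMM : Sold⁻¹ * Sig = M * M := by
    rw [hSoldinv, ← hSA2, hMdef]
    calc SB⁻¹ * SB⁻¹ * (SA * SA) = SB⁻¹ * (SB⁻¹ * SA) * SA := by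
          simp only [Matrix.mul_assoc]
      _ = SB⁻¹ * (SA * SB⁻¹) * SA := by rw [hABinv]
      _ = SB⁻¹ * SA * (SB⁻¹ * SA) := by simp only [Matrix.mul_assoc]
  -- scalar facts
  have ht0 : (0 : ℝ) < t := lt_trans hε hviol
  set s := Real.sqrt (t / ε) with hsdef
  have hs2 : s ^ 2 = t / ε := Real.sq_sqrt (le_of_lt (div_pos ht0 hε))
  have hs0 : 0 < s := by
    have := Real.sqrt_nonneg (t / ε)
    have h1 : (1 : ℝ) < t / ε := (one_lt_div hε).mpr hviol
    nlinarith [hs2]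
  have h1η : 1 + η = s := by rw [hη]; ring
  have hcη : (1 / (1 + η)) * η = 1 - 1 / (1 + η) := by
    rw [h1η] at *
    field_simp
    linarith [h1η]
  -- the interpolated square root over SB⁻¹
  set c := 1 / (1 + η) with hcdef
  have hP : SB⁻¹ * Stil = c • (M + η • 1) := by
    rw [hStil, Matrix.mul_smul, Matrix.mul_add, Matrix.mul_smul, hBinv, hMdef]
  have hP' : Stil * SB⁻¹ = SB⁻¹ * Stil := by
    rw [hStil, Matrix.smul_mul, Matrix.mul_smul, Matrix.add_mul, Matrix.mul_add,
      Matrix.smul_mul, Matrix.mul_smul, hABinv, hBinv, hBinv']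
  have hPP : Sold⁻¹ * (Stil * Stil) = (SB⁻¹ * Stil) * (SB⁻¹ * Stil) := by
    rw [hSoldinv]
    calc SB⁻¹ * SB⁻¹ * (Stil * Stil) = SB⁻¹ * (SB⁻¹ * Stil) * Stil := by
          simp only [Matrix.mul_assoc]
      _ = SB⁻¹ * (Stil * SB⁻¹) * Stil := by rw [hP']
      _ = SB⁻¹ * Stil * (SB⁻¹ * Stil) := by simp only [Matrix.mul_assoc]
  have hQ : c • (M + η • 1) - 1 = c • (M - 1) := by
    have expand : c • (M + η • (1 : Matrix (Fin d) (Fin d) ℝ)) = c • M + (c * η) • 1 := by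
      rw [smul_add, smul_smul]
    rw [expand, hcη]
    module
  have hgoalmat : (1 : Matrix (Fin d) (Fin d) ℝ) + Sold⁻¹ * (Stil * Stil) - 2 • (SB⁻¹ * Stil)
      = (c * c) • ((M - 1) * (M - 1)) := by
    rw [hPP, hP]
    have e : ∀ P : Matrix (Fin d) (Fin d) ℝ, (1 : Matrix (Fin d) (Fin d) ℝ) + P * P - 2 • P
        = (P - 1) * (P - 1) := fun P => by noncomm_ring
    rw [e, hQ, Matrix.smul_mul, Matrix.mul_smul, smul_smul]
  have htr : t = ((M - 1) * (M - 1)).trace := by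
    rw [ht]
    congr 1
    rw [hMM]
    noncomm_ring
  rw [hgoalmat, Matrix.trace_smul, smul_eq_mul, ← htr, hcdef, h1η]
  have hs2' : ε * (s * s) = t := by
    rw [← sq, hs2]
    field_simp
  rw [← hs2']
  field_simp
end

section
/- Let Σ, Σ_old be symmetric positive definite d×d matrices with Σ ≠ Σ_old. Define g: [0,∞) → ℝ by g(η) = the value of the covariance KL objective tr(Σ⁻¹Σ̃(η)) − log det Σ̃(η) at Σ̃(η) = ((ηΣ_old⁻¹ + Σ⁻¹)/(η+1))⁻¹. Then the covariance KL divergence to the old policy, h(η) = ½[tr(Σ_old⁻¹ Σ̃(η)) − d + log(det Σ_old / det Σ̃(η))], is continuous in η, satisfies h(0) = ½[tr(Σ_old⁻¹Σ) − d + log(det Σ_old/det Σ)] > 0, and h(η) → 0 as η → ∞. -/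
open Matrix Filter

lemma trace_eq_sum_eigs {d : ℕ} {A : Matrix (Fin d) (Fin d) ℝ} (hA : A.IsHermitian) :
    A.trace = ∑ i, hA.eigenvalues i := by
  conv_lhs => rw [hA.spectral_theorem]
  rw [Unitary.conjStarAlgAut_apply, Matrix.trace_mul_cycle,
    Unitary.coe_star_mul_self, one_mul]
  simp [Matrix.trace_diagonal]

lemma posSemidef_smul' {d : ℕ} {M : Matrix (Fin d) (Fin d) ℝ} (hM : M.PosSemidef)
    {c : ℝ} (hc : 0 ≤ c) : (c • M).PosSemidef := by
  exact hM.smul hc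

lemma posDef_smul' {d : ℕ} {M : Matrix (Fin d) (Fin d) ℝ} (hM : M.PosDef)
    {c : ℝ} (hc : 0 < c) : (c • M).PosDef := by
  exact hM.smul hc

open scoped MatrixOrder in
lemma kl_quant_pos {d : ℕ} (Sig Sold : Matrix (Fin d) (Fin d) ℝ)
    (hSig : Sig.PosDef) (hSold : Sold.PosDef) (hne : Sig ≠ Sold) :
    0 < (Sold⁻¹ * Sig).trace - d + Real.log (Sold.det / Sig.det) := by
  have hP : (Sold⁻¹).PosDef := hSold.inv
  set R := CFC.sqrt (Sold⁻¹) with hRdef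
  have hRh : R.IsHermitian := (CFC.sqrt_nonneg (Sold⁻¹)).posSemidef.isHermitian
  have hRR : R * R = Sold⁻¹ := CFC.sqrt_mul_sqrt_self _ hP.posSemidef.nonneg
  set C := R * Sig * R with hCdef
  have hCps : C.PosSemidef := by
    have := hSig.posSemidef.mul_mul_conjTranspose_same R
    rwa [hRh.eq] at this
  have hC : C.IsHermitian := hCps.isHermitian
  have hdetR2 : R.det * R.det = (Sold.det)⁻¹ := by
    rw [← Matrix.det_mul, hRR, Matrix.det_nonsing_inv, Ring.inverse_eq_inv]
  have hdetSold : (0:ℝ) < Sold.det := hSold.det_pos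
  have hdetSig : (0:ℝ) < Sig.det := hSig.det_pos
  have hdetR : R.det ≠ 0 := by
    intro h0
    rw [h0, zero_mul] at hdetR2
    exact absurd hdetR2.symm (by positivity)
  have hdetC : C.det = (Sold.det)⁻¹ * Sig.det := by
    rw [hCdef, Matrix.det_mul, Matrix.det_mul, ← hdetR2]; ring
  have hdetCpos : 0 < C.det := by rw [hdetC]; positivity
  have hprod : ∏ i, hC.eigenvalues i = C.det := by
    rw [hC.det_eq_prod_eigenvalues]; norm_num
  have heigpos : ∀ i, 0 < hC.eigenvalues i := by
    intro i
    rcases lt_or_eq_of_le (hCps.eigenvalues_nonneg i) with h | h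
    · exact h
    · exfalso
      have : ∏ j, hC.eigenvalues j = 0 := Finset.prod_eq_zero (Finset.mem_univ i) h.symm
      rw [hprod] at this; exact hdetCpos.ne' this
  have htr : (Sold⁻¹ * Sig).trace = C.trace := by
    rw [hCdef, Matrix.trace_mul_cycle, hRR]
  have hlog : Real.log (Sold.det / Sig.det) = - ∑ i, Real.log (hC.eigenvalues i) := by
    rw [← Real.log_prod (fun i _ => (heigpos i).ne'), hprod, hdetC]
    rw [Real.log_mul (by positivity) (by positivity), Real.log_inv, Real.log_div hdetSold.ne' hdetSig.ne']
    ring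
  -- exists eigenvalue ≠ 1
  have hCne : C ≠ 1 := by
    intro hC1
    apply hne
    have h2 : R⁻¹ * C * R⁻¹ = R⁻¹ * R⁻¹ := by rw [hC1]; simp
    rw [hCdef] at h2
    have hRu : IsUnit R.det := isUnit_iff_ne_zero.mpr hdetR
    rw [Matrix.mul_assoc R Sig R, ← Matrix.mul_assoc R⁻¹ R (Sig * R),
      Matrix.nonsing_inv_mul R hRu, one_mul, Matrix.mul_assoc Sig R R⁻¹,
      Matrix.mul_nonsing_inv R hRu, Matrix.mul_one] at h2
    rw [h2, ← Matrix.mul_inv_rev, hRR, Matrix.nonsing_inv_nonsing_inv _ (isUnit_iff_ne_zero.mpr hdetSold.ne')]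
  have hex : ∃ i, hC.eigenvalues i ≠ 1 := by
    by_contra hall
    push_neg at hall
    apply hCne
    calc C = _ := hC.spectral_theorem
    _ = 1 := by
        have h3 : (RCLike.ofReal ∘ hC.eigenvalues : Fin d → ℝ) = fun _ => 1 := by
          funext i; simp [hall i]
        have : Matrix.diagonal (RCLike.ofReal ∘ hC.eigenvalues) = (1 : Matrix (Fin d) (Fin d) ℝ) := by
          rw [h3]; exact Matrix.diagonal_one
        rw [Unitary.conjStarAlgAut_apply, this, mul_one, Matrix.mem_unitaryGroup_iff.mp (IsHermitian.eigenvectorUnitary hC).2]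
  obtain ⟨i₀, hi₀⟩ := hex
  have hd : (d:ℝ) = ∑ _i : Fin d, (1:ℝ) := by simp
  rw [htr, trace_eq_sum_eigs hC, hlog, hd]
  have : (0:ℝ) = ∑ _i : Fin d, (0:ℝ) := by simp
  rw [this, ← Finset.sum_sub_distrib, ← Finset.sum_neg_distrib, ← Finset.sum_add_distrib]
  apply Finset.sum_lt_sum
  · intro i _
    have := Real.log_le_sub_one_of_pos (heigpos i)
    linarith
  · exact ⟨i₀, Finset.mem_univ i₀, by
      have := Real.log_lt_sub_one_of_pos (heigpos i₀) hi₀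
      linarith⟩

/-- Solvability of the KL covariance trust-region dual: along the precision
interpolation Σ̃(η) = ((ηΣ_old⁻¹ + Σ⁻¹)/(η+1))⁻¹, the covariance KL divergence to the old
policy h(η) = ½[tr(Σ_old⁻¹Σ̃(η)) − d + log(det Σ_old / det Σ̃(η))] is continuous on [0,∞),
is positive at η = 0 (where Σ̃(0) = Σ ≠ Σ_old), and tends to 0 as η → ∞. -/
theorem kl_dual_solvable {d : ℕ} (Sig Sold : Matrix (Fin d) (Fin d) ℝ)
    (hSig : Sig.PosDef) (hSold : Sold.PosDef) (hne : Sig ≠ Sold)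
    (Stil : ℝ → Matrix (Fin d) (Fin d) ℝ)
    (hStil : ∀ η, Stil η = ((1 / (η + 1)) • (η • Sold⁻¹ + Sig⁻¹))⁻¹)
    (h : ℝ → ℝ)
    (hh : ∀ η, h η =
      (1 / 2) * ((Sold⁻¹ * Stil η).trace - d + Real.log (Sold.det / (Stil η).det))) :
    ContinuousOn h (Set.Ici (0 : ℝ)) ∧
    h 0 = (1 / 2) * ((Sold⁻¹ * Sig).trace - d + Real.log (Sold.det / Sig.det)) ∧
    0 < h 0 ∧
    Tendsto h atTop (nhds 0) := by
  have hA : (Sold⁻¹).PosDef := hSold.inv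
  have hB : (Sig⁻¹).PosDef := hSig.inv
  set A := Sold⁻¹ with hAdef
  set B := Sig⁻¹ with hBdef
  set N : ℝ → Matrix (Fin d) (Fin d) ℝ := fun s => (1 - s) • A + s • B with hNdef
  -- posdef on [0,1]
  have hNpos : ∀ s ∈ Set.Icc (0:ℝ) 1, (N s).PosDef := by
    intro s hs
    rcases eq_or_lt_of_le hs.1 with h0 | h0
    · have : N s = A := by simp [hNdef, ← h0]
      rw [this]; exact hA
    · have h1 : (N s) = (1 - s) • A + s • B := rfl
      rw [h1]
      have hsB : (s • B).PosDef := posDef_smul' hB h0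
      have hsA : ((1 - s) • A).PosSemidef := posSemidef_smul' hA.posSemidef (by linarith [hs.2])
      exact Matrix.PosDef.posSemidef_add hsA hsB
  have hNdet : ∀ s ∈ Set.Icc (0:ℝ) 1, 0 < (N s).det := fun s hs => (hNpos s hs).det_pos
  -- phi
  set φ : ℝ → ℝ := fun s => (1/2) * (((N s).det)⁻¹ * (A * (N s).adjugate).trace - d
      + Real.log (Sold.det * (N s).det)) with hφdef
  have hNcont : Continuous N := by
    apply Continuous.add
    · exact (continuous_const.sub continuous_id).smul continuous_const
    · exact continuous_id.smul continuous_const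
  have hφcont : ∀ s ∈ Set.Icc (0:ℝ) 1, ContinuousAt φ s := by
    intro s hs
    have hdet : ContinuousAt (fun t => (N t).det) s := (hNcont.matrix_det).continuousAt
    have hd0 : (N s).det ≠ 0 := (hNdet s hs).ne'
    apply ContinuousAt.mul continuousAt_const
    apply ContinuousAt.add
    · apply ContinuousAt.sub _ continuousAt_const
      exact (hdet.inv₀ hd0).mul
        (((continuous_const.matrix_mul (hNcont.matrix_adjugate)).matrix_trace).continuousAt)
    · exact ContinuousAt.log (continuousAt_const.mul hdet)
        (mul_pos hSold.det_pos (hNdet s hs)).ne'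
  -- h = φ ∘ σ on η ≥ 0
  have key : ∀ η : ℝ, 0 ≤ η → h η = φ (1 / (η + 1)) := by
    intro η hη
    have hη1 : (0:ℝ) < η + 1 := by linarith
    have hM : (1 / (η + 1)) • (η • A + B) = N (1 / (η + 1)) := by
      rw [hNdef]
      simp only [smul_add, smul_smul]
      congr 2
      field_simp
      ring
    rw [hh, hStil, hM]
    have hmem : 1 / (η + 1) ∈ Set.Icc (0:ℝ) 1 := by
      constructor
      · positivity
      · rw [div_le_one hη1]; linarith
    set s := 1 / (η + 1)
    have hd0 : (N s).det ≠ 0 := (hNdet s hmem).ne'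
    have hinv : (N s)⁻¹ = ((N s).det)⁻¹ • (N s).adjugate := by
      rw [Matrix.inv_def, Ring.inverse_eq_inv]
    have h1 : (A * (N s)⁻¹).trace = ((N s).det)⁻¹ * (A * (N s).adjugate).trace := by
      rw [hinv, Matrix.mul_smul, Matrix.trace_smul, smul_eq_mul]
    have h2 : ((N s)⁻¹).det = ((N s).det)⁻¹ := by
      rw [Matrix.det_nonsing_inv, Ring.inverse_eq_inv]
    have h3 : Sold.det / ((N s).det)⁻¹ = Sold.det * (N s).det := by
      rw [div_eq_mul_inv, inv_inv]
    rw [h1, h2, h3]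
  -- σ continuity
  have hσ : ∀ η : ℝ, 0 ≤ η → ContinuousAt (fun t : ℝ => 1 / (t + 1)) η := by
    intro η hη
    exact ContinuousAt.div continuousAt_const (continuousAt_id.add continuousAt_const)
      (by intro hc; linarith)
  -- part 1: continuity
  have part1 : ContinuousOn h (Set.Ici (0 : ℝ)) := by
    intro η hη
    have hη0 : (0:ℝ) ≤ η := hη
    have hmem : 1 / (η + 1) ∈ Set.Icc (0:ℝ) 1 := by
      constructor
      · positivity
      · rw [div_le_one (by linarith)]; linarith
    have hcomp : ContinuousAt (φ ∘ (fun t : ℝ => 1 / (t + 1))) η :=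
      ContinuousAt.comp (hφcont _ hmem) (hσ η hη0)
    apply ContinuousWithinAt.congr hcomp.continuousWithinAt
    · intro t ht; exact key t ht
    · exact key η hη0
  -- h 0 = ...
  have hStil0 : Stil 0 = Sig := by
    rw [hStil]
    simp only [zero_add, div_one, zero_smul, zero_add, one_smul]
    exact Matrix.nonsing_inv_nonsing_inv Sig (isUnit_iff_ne_zero.mpr hSig.det_pos.ne')
  have part2 : h 0 = (1 / 2) * ((Sold⁻¹ * Sig).trace - d + Real.log (Sold.det / Sig.det)) := by
    rw [hh, hStil0]
  have part3 : 0 < h 0 := by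
    rw [part2]
    have := kl_quant_pos Sig Sold hSig hSold hne
    linarith
  -- limit
  have hφ0 : φ 0 = 0 := by
    have hN0 : N 0 = A := by simp [hNdef]
    have hdA : 0 < A.det := hA.det_pos
    rw [hφdef]
    simp only [hN0]
    rw [Matrix.mul_adjugate, Matrix.trace_smul, Matrix.trace_one]
    have hAd : A.det = (Sold.det)⁻¹ := by
      rw [hAdef, Matrix.det_nonsing_inv, Ring.inverse_eq_inv]
    have e1 : (A.det)⁻¹ * (A.det • (Fintype.card (Fin d) : ℝ)) = (d : ℝ) := by
      rw [smul_eq_mul, ← mul_assoc, inv_mul_cancel₀ hdA.ne', one_mul, Fintype.card_fin]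
    have e2 : Sold.det * A.det = 1 := by
      rw [hAd, mul_inv_cancel₀ hSold.det_pos.ne']
    rw [e1, e2, Real.log_one]
    ring
  have hσtop : Tendsto (fun t : ℝ => 1 / (t + 1)) atTop (nhds 0) := by
    have : Tendsto (fun t : ℝ => t + 1) atTop atTop := tendsto_atTop_add_const_right _ _ tendsto_id
    exact this.inv_tendsto_atTop.congr (fun t => by simp [one_div])
  have part4 : Tendsto h atTop (nhds 0) := by
    have hmem0 : (0:ℝ) ∈ Set.Icc (0:ℝ) 1 := by constructor <;> norm_num
    have : Tendsto (fun η : ℝ => φ (1 / (η + 1))) atTop (nhds (φ 0)) := by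
      have := ((hφcont 0 hmem0).tendsto).comp hσtop
      simpa [Function.comp_def] using this
    rw [hφ0] at this
    apply this.congr'
    filter_upwards [eventually_ge_atTop (0:ℝ)] with η hη
    exact (key η hη).symm
  exact ⟨part1, part2, part3, part4⟩
end

section
/- Let μ, μ_old ∈ ℝ^d, Σ symmetric positive definite, ε > 0, and define ω as in the mean projection: ω = max(0, sqrt((μ − μ_old)ᵀΣ⁻¹(μ − μ_old)/ε) − 1) and μ̃ = (μ + ω μ_old)/(1 + ω). Then (μ̃ − μ_old)ᵀ Σ⁻¹ (μ̃ − μ_old) ≤ ε always holds, i.e., the projected mean always satisfies the trust region constraint. -/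
open Matrix

/-- The projected mean always satisfies the trust region constraint. -/
theorem mean_projection_feasible {d : ℕ} (Sig : Matrix (Fin d) (Fin d) ℝ)
    (hSig : Sig.PosDef) (μ μold : Fin d → ℝ) (ε : ℝ) (hε : 0 < ε)
    (ω : ℝ)
    (hω : ω = max 0 (Real.sqrt ((μ - μold) ⬝ᵥ (Sig⁻¹ *ᵥ (μ - μold)) / ε) - 1))
    (μtil : Fin d → ℝ) (hμtil : μtil = (1 / (1 + ω)) • (μ + ω • μold)) :
    (μtil - μold) ⬝ᵥ (Sig⁻¹ *ᵥ (μtil - μold)) ≤ ε := by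
  set q : ℝ := (μ - μold) ⬝ᵥ (Sig⁻¹ *ᵥ (μ - μold)) with hq
  have hωnn : 0 ≤ ω := by rw [hω]; exact le_max_left _ _
  have h1ω : (0:ℝ) < 1 + ω := by linarith
  have hqnn : 0 ≤ q := (hSig.inv.posSemidef).dotProduct_mulVec_nonneg (μ - μold)
  have hdiff : μtil - μold = (1 / (1 + ω)) • (μ - μold) := by
    rw [hμtil]
    funext i
    simp only [Pi.sub_apply, Pi.smul_apply, Pi.add_apply, smul_eq_mul]
    field_simp
    ring
  have hval : (μtil - μold) ⬝ᵥ (Sig⁻¹ *ᵥ (μtil - μold)) = (1/(1+ω))^2 * q := by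
    rw [hdiff, smul_dotProduct, mulVec_smul, dotProduct_smul, smul_eq_mul, smul_eq_mul, hq]
    ring
  rw [hval]
  rcases le_or_gt (Real.sqrt (q / ε)) 1 with h | h
  · have hq1 : q / ε ≤ 1 := by
      nlinarith [Real.sq_sqrt (div_nonneg hqnn hε.le), Real.sqrt_nonneg (q / ε)]
    have hqe : q ≤ ε := (div_le_one hε).mp hq1
    have hω0 : ω = 0 := by rw [hω]; exact max_eq_left (by linarith)
    rw [hω0]; norm_num; exact hqe
  · have hω' : ω = Real.sqrt (q / ε) - 1 := by
      rw [hω]; exact max_eq_right (by linarith)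
    have h1 : 1 + ω = Real.sqrt (q / ε) := by rw [hω']; ring
    have hsq : (Real.sqrt (q / ε))^2 = q / ε := Real.sq_sqrt (div_nonneg hqnn hε.le)
    have hqpos : 0 < q := lt_trans hε ((one_lt_div hε).mp (by nlinarith))
    apply le_of_eq
    rw [h1, div_pow, one_pow, hsq]
    field_simp
end
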